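/- For every n ∈ ℤ>0 and every ε ∈ (1/(4n), 1) such that 1/(8ε) is an integer, there exists a directed hypergraph H = (V,F,z) with 2n vertices, Ω(n²/ε) hyperarcs, all hyperarcs of rank three (|t(f)| = 2, |h(f)| = 1), such that no proper re-weighted sub-hypergraph H̃ = (V, F̃, z̃) with F̃ ⊊ F satisfies (1−ε)·x^⊤L_H(x) ≤ x^⊤L_{H̃}(x) ≤ (1+ε)·x^⊤L_H(x) for all x ∈ {0,1}^V. -/

import Mathlib

open Finset
open scoped NNReal

noncomputable def dirEnergy {V : Type*} [DecidableEq V]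
    (x : V → ℝ) (f : Finset V × Finset V) : ℝ :=
  (((f.1 ×ˢ f.2).sup fun p => Real.toNNReal (x p.1 - x p.2) ^ 2 : ℝ≥0) : ℝ)

lemma dirEnergy_pair {V : Type*} [DecidableEq V] (x : V → ℝ)
    (h : ∀ v, x v = 0 ∨ x v = 1) (a b c : V) :
    dirEnergy x ({a, b}, {c}) =
      if (x a = 1 ∨ x b = 1) ∧ x c = 0 then 1 else 0 := by
  unfold dirEnergy
  rw [Finset.sup_product_left]
  simp only [Finset.sup_insert, Finset.sup_singleton]
  rcases h a with ha | ha <;> rcases h b with hb | hb <;> rcases h c with hc | hc <;>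
    simp [ha, hb, hc]

lemma pair_eq {α : Type*} [DecidableEq α] {a b c d : α}
    (h : ({a, b} : Finset α) = {c, d}) : (a = c ∧ b = d) ∨ (a = d ∧ b = c) := by
  have h1 : a ∈ ({c, d} : Finset α) := by rw [← h]; simp
  have h2 : b ∈ ({c, d} : Finset α) := by rw [← h]; simp
  have h3 : c ∈ ({a, b} : Finset α) := by rw [h]; simp
  have h4 : d ∈ ({a, b} : Finset α) := by rw [h]; simp
  simp only [Finset.mem_insert, Finset.mem_singleton] at h1 h2 h3 h4
  tauto

lemma ite_one_eq_one {P : Prop} [Decidable P] : ((if P then (1:ℝ) else 0) = 1) ↔ P := by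
  split_ifs with h <;> simp [h]

lemma ite_zero_eq_zero {P : Prop} [Decidable P] : ((if P then (0:ℝ) else 1) = 0) ↔ P := by
  split_ifs with h <;> simp [h]

lemma ind_incl_excl' (P Q R : Prop) [Decidable P] [Decidable Q] [Decidable R] :
    (if P ∧ R then (1:ℝ) else 0) + (if Q ∧ R then 1 else 0)
      - (if (P ∨ Q) ∧ R then 1 else 0) = if (P ∧ Q) ∧ R then 1 else 0 := by
  by_cases hP : P <;> by_cases hQ : Q <;> by_cases hR : R <;> simp [hP, hQ, hR]

lemma sum_ind1 {α : Type*} [Fintype α] [DecidableEq α] (c : ℝ) (p : α) :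
    ∑ a : α, (if a = p then c else 0) = c := by
  rw [Finset.sum_ite_eq']; simp

lemma sum_ind2 {α : Type*} [Fintype α] [DecidableEq α] (c : ℝ) (p q : α) (h : p ≠ q) :
    ∑ a : α, (if a = p ∨ a = q then c else 0) = 2 * c := by
  have key : ∀ a : α, (if a = p ∨ a = q then c else 0)
      = (if a = p then c else 0) + (if a = q then c else 0) := by
    intro a; by_cases h1 : a = p <;> by_cases h2 : a = q <;> simp_all
  rw [Finset.sum_congr rfl fun a _ => key a, Finset.sum_add_distrib, sum_ind1, sum_ind1]; ring

lemma sum_ind3 {α : Type*} [Fintype α] [DecidableEq α] (c : ℝ) (p q r : α)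
    (hpq : p ≠ q) (hpr : p ≠ r) (hqr : q ≠ r) :
    ∑ a : α, (if a = p ∨ a = q ∨ a = r then c else 0) = 3 * c := by
  have key : ∀ a : α, (if a = p ∨ a = q ∨ a = r then c else 0)
      = (if a = p then c else 0) + (if a = q ∨ a = r then c else 0) := by
    intro a; by_cases h1 : a = p <;> by_cases h2 : a = q <;> by_cases h3 : a = r <;> simp_all
  rw [Finset.sum_congr rfl fun a _ => key a, Finset.sum_add_distrib, sum_ind1,
    sum_ind2 c q r hqr]; ring

lemma sum_ind4 {α : Type*} [Fintype α] [DecidableEq α] (c : ℝ) (p q r t : α)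
    (hpq : p ≠ q) (hpr : p ≠ r) (hpt : p ≠ t) (hqr : q ≠ r) (hqt : q ≠ t) (hrt : r ≠ t) :
    ∑ a : α, (if a = p ∨ a = q ∨ a = r ∨ a = t then c else 0) = 4 * c := by
  have key : ∀ a : α, (if a = p ∨ a = q ∨ a = r ∨ a = t then c else 0)
      = (if a = p then c else 0) + (if a = q ∨ a = r ∨ a = t then c else 0) := by
    intro a; by_cases h1 : a = p <;> by_cases h2 : a = q <;> by_cases h3 : a = r <;>
      by_cases h4 : a = t <;> simp_all
  rw [Finset.sum_congr rfl fun a _ => key a, Finset.sum_add_distrib, sum_ind1,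
    sum_ind3 c q r t hqr hqt hrt]; ring

lemma sum_kk {n : ℕ} [NeZero n] (c : ℝ) (P : ZMod n → Prop) [DecidablePred P] (k : ZMod n) :
    ∑ q : ZMod n × ZMod n, (c * if P q.1 ∧ q.2 = k then (1:ℝ) else 0)
      = ∑ a : ZMod n, (if P a then c else 0) := by
  rw [Fintype.sum_prod_type]
  refine Finset.sum_congr rfl fun a _ => ?_
  have key : ∀ b : ZMod n, (c * if P a ∧ b = k then (1:ℝ) else 0)
      = if b = k then (if P a then c else 0) else 0 := by
    intro b; by_cases h1 : P a <;> by_cases h2 : b = k <;> simp [h1, h2]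
  rw [Finset.sum_congr rfl fun b _ => key b, Finset.sum_ite_eq']
  simp

lemma count1 {n s : ℕ} [NeZero n] (c : ℝ) (D : Fin s → ZMod n) (hD : ∀ j, D j ≠ 0)
    (t k : ZMod n) :
    ∑ p : Fin s × ZMod n × ZMod n,
      (c * if (p.2.1 = t ∨ p.2.1 + D p.1 = t) ∧ p.2.2 = k then (1:ℝ) else 0)
      = c * (2 * s) := by
  rw [Fintype.sum_prod_type]
  have hrow : ∀ j' : Fin s,
      ∑ q : ZMod n × ZMod n,
        (c * if (q.1 = t ∨ q.1 + D j' = t) ∧ q.2 = k then (1:ℝ) else 0) = 2 * c := by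
    intro j'
    refine Eq.trans (sum_kk c (fun a => a = t ∨ a + D j' = t) k) ?_
    have key : ∀ a : ZMod n, (if (a = t ∨ a + D j' = t) then c else 0)
        = if (a = t ∨ a = t - D j') then c else 0 := by
      intro a
      refine if_congr (or_congr Iff.rfl eq_sub_iff_add_eq.symm) rfl rfl
    rw [Finset.sum_congr rfl fun a _ => key a]
    exact sum_ind2 c t (t - D j') fun h => hD j' (sub_eq_self.mp h.symm)
  rw [Finset.sum_congr rfl fun j' _ => hrow j', Finset.sum_const, Finset.card_univ,
    Fintype.card_fin, nsmul_eq_mul]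
  ring

lemma count2 {n s : ℕ} [NeZero n] (c : ℝ) (D : Fin s → ZMod n) (hD : ∀ j, D j ≠ 0)
    (hDD : ∀ j j' : Fin s, D j = D j' → j = j') (hDsum : ∀ j j' : Fin s, D j + D j' ≠ 0)
    (j : Fin s) (i k : ZMod n) :
    ∑ p : Fin s × ZMod n × ZMod n,
      (c * if ((p.2.1 = i ∨ p.2.1 + D p.1 = i) ∨ (p.2.1 = i + D j ∨ p.2.1 + D p.1 = i + D j))
            ∧ p.2.2 = k then (1:ℝ) else 0)
      = c * (4 * s - 1) := by
  have hij : i ≠ i + D j := fun h => hD j (left_eq_add.mp h)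
  rw [Fintype.sum_prod_type]
  have hrow : ∀ j' : Fin s,
      ∑ q : ZMod n × ZMod n,
        (c * if ((q.1 = i ∨ q.1 + D j' = i) ∨ (q.1 = i + D j ∨ q.1 + D j' = i + D j))
          ∧ q.2 = k then (1:ℝ) else 0) = if j' = j then 3 * c else 4 * c := by
    intro j'
    refine Eq.trans (sum_kk c
      (fun a => (a = i ∨ a + D j' = i) ∨ (a = i + D j ∨ a + D j' = i + D j)) k) ?_
    by_cases hj : j' = j
    · subst hj
      have key : ∀ a : ZMod n,
          (if ((a = i ∨ a + D j' = i) ∨ (a = i + D j' ∨ a + D j' = i + D j')) then c else 0)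
          = if (a = i ∨ a = i + D j' ∨ a = i - D j') then c else 0 := by
        intro a
        refine if_congr ?_ rfl rfl
        rw [← eq_sub_iff_add_eq, ← eq_sub_iff_add_eq, add_sub_cancel_right]
        tauto
      rw [Finset.sum_congr rfl fun a _ => key a, if_pos rfl]
      refine sum_ind3 c i (i + D j') (i - D j') hij
        (fun h => hD j' (sub_eq_self.mp h.symm)) (fun h => ?_)
      rw [eq_sub_iff_add_eq, add_assoc] at h
      exact hDsum j' j' (add_eq_left.mp h)
    · have hd : D j' ≠ D j := fun h => hj (hDD j' j h)
      have key : ∀ a : ZMod n,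
          (if ((a = i ∨ a + D j' = i) ∨ (a = i + D j ∨ a + D j' = i + D j)) then c else 0)
          = if (a = i ∨ a = i + D j ∨ a = i - D j' ∨ a = i + D j - D j') then c else 0 := by
        intro a
        refine if_congr ?_ rfl rfl
        rw [← eq_sub_iff_add_eq, ← eq_sub_iff_add_eq]
        tauto
      rw [Finset.sum_congr rfl fun a _ => key a, if_neg hj]
      refine sum_ind4 c i (i + D j) (i - D j') (i + D j - D j') hij
        (fun h => hD j' (sub_eq_self.mp h.symm))
        (fun h => ?_) (fun h => ?_) (fun h => hD j' (sub_eq_self.mp h.symm))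
        (fun h => hij (sub_left_injective h))
      · rw [eq_sub_iff_add_eq, add_comm i (D j'), add_comm i (D j)] at h
        exact hd (add_right_cancel h)
      · rw [eq_sub_iff_add_eq, add_assoc] at h
        exact hDsum j j' (add_eq_left.mp h)
  rw [Finset.sum_congr rfl fun j' _ => hrow j']
  have key : ∀ j' : Fin s, (if j' = j then 3 * c else 4 * c)
      = 4 * c - (if j' = j then c else 0) := by
    intro j'; by_cases h : j' = j <;> simp [h] <;> ring
  rw [Finset.sum_congr rfl fun j' _ => key j', Finset.sum_sub_distrib, Finset.sum_const,
    Finset.card_univ, Fintype.card_fin, nsmul_eq_mul, sum_ind1]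
  ring

theorem stmt8 (n : ℕ) (hn : 0 < n) (ε : ℝ)
    (hε : ε ∈ Set.Ioo (1 / (4 * (n : ℝ))) 1)
    (hint : ∃ s : ℕ, (s : ℝ) = 1 / (8 * ε)) :
    ∃ (F : Finset (Finset (Fin (2 * n)) × Finset (Fin (2 * n))))
      (z : Finset (Fin (2 * n)) × Finset (Fin (2 * n)) → ℝ),
      (∀ f ∈ F, f.1.card = 2 ∧ f.2.card = 1) ∧
      (∀ f ∈ F, 0 < z f) ∧
      ((n : ℝ) ^ 2 / (8 * ε) ≤ F.card) ∧
      ∀ Ft : Finset (Finset (Fin (2 * n)) × Finset (Fin (2 * n))), Ft ⊂ F →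
        ∀ zt : Finset (Fin (2 * n)) × Finset (Fin (2 * n)) → ℝ, (∀ f ∈ Ft, 0 ≤ zt f) →
          ¬ (∀ x : Fin (2 * n) → ℝ, (∀ v, x v = 0 ∨ x v = 1) →
              (1 - ε) * (∑ f ∈ F, z f * dirEnergy x f) ≤ (∑ f ∈ Ft, zt f * dirEnergy x f) ∧
              (∑ f ∈ Ft, zt f * dirEnergy x f) ≤ (1 + ε) * (∑ f ∈ F, z f * dirEnergy x f)) := by
  obtain ⟨hεl, hεu⟩ := hε
  obtain ⟨s, hs⟩ := hint
  haveI : NeZero n := ⟨hn.ne'⟩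
  have hn' : (0:ℝ) < n := by positivity
  have hε0 : 0 < ε := lt_trans (by positivity) hεl
  have hse : 8 * ε * (s:ℝ) = 1 := by rw [hs]; field_simp
  have h4n : 1 < 4 * (n:ℝ) * ε := by
    rw [div_lt_iff₀ (by positivity)] at hεl; linarith
  have h2s : 2 * s < n := by
    have h2s' : 2 * (s:ℝ) < n := by nlinarith
    exact_mod_cast h2s'
  -- vertices
  set u : ZMod n → Fin (2*n) :=
    (fun a => ⟨a.val, by have := ZMod.val_lt a; omega⟩) with hu_def
  set w : ZMod n → Fin (2*n) :=
    (fun b => ⟨n + b.val, by have := ZMod.val_lt b; omega⟩) with hw_def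
  have hu_inj : Function.Injective u := by
    intro a b h
    rw [hu_def] at h
    have : a.val = b.val := by simpa using h
    exact ZMod.val_injective n this
  have hw_inj : Function.Injective w := by
    intro a b h
    rw [hw_def] at h
    have : a.val = b.val := by simpa using h
    exact ZMod.val_injective n this
  have huval : ∀ a : ZMod n, ((u a : Fin (2*n)) : ℕ) = a.val := fun a => rfl
  have hwval : ∀ b : ZMod n, ((w b : Fin (2*n)) : ℕ) = n + b.val := fun b => rfl
  have huw : ∀ a b : ZMod n, u a ≠ w b := by
    intro a b h
    have h1 : ((u a : Fin (2*n)) : ℕ) = ((w b : Fin (2*n)) : ℕ) := by rw [h]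
    rw [huval, hwval] at h1
    have := ZMod.val_lt a; omega
  -- differences
  set D : Fin s → ZMod n := (fun j => (((j : ℕ) + 1 : ℕ) : ZMod n)) with hD_def
  have hD0 : ∀ j : Fin s, D j ≠ 0 := by
    intro j h
    rw [hD_def] at h
    rw [ZMod.natCast_eq_zero_iff] at h
    have h1 := Nat.le_of_dvd (Nat.succ_pos _) h
    have h2 := j.isLt
    omega
  have hDD : ∀ j j' : Fin s, D j = D j' → j = j' := by
    intro j j' h
    simp only [hD_def] at h
    have h1 : ((j:ℕ) + 1 : ℕ) < n := by have := j.isLt; omega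
    have h2 : ((j':ℕ) + 1 : ℕ) < n := by have := j'.isLt; omega
    have hv := congrArg ZMod.val h
    rw [ZMod.val_cast_of_lt h1, ZMod.val_cast_of_lt h2] at hv
    exact Fin.ext (by omega)
  have hDsum : ∀ j j' : Fin s, D j + D j' ≠ 0 := by
    intro j j' h
    simp only [hD_def] at h
    have h' : (((((j:ℕ) + 1) + ((j':ℕ) + 1)) : ℕ) : ZMod n) = 0 := by
      push_cast
      push_cast at h
      linear_combination h
    rw [ZMod.natCast_eq_zero_iff] at h'
    have h1 : n ≤ ((j:ℕ) + 1) + ((j':ℕ) + 1) := Nat.le_of_dvd (by omega) h'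
    have h2 := j.isLt; have h3 := j'.isLt
    omega
  -- hyperarcs
  set A : Fin s × ZMod n × ZMod n → Finset (Fin (2*n)) × Finset (Fin (2*n)) :=
    (fun p => ({u p.2.1, u (p.2.1 + D p.1)}, {w p.2.2})) with hA_def
  have hA_inj : Function.Injective A := by
    rintro ⟨j, i, k⟩ ⟨j', i', k'⟩ h
    rw [hA_def, Prod.mk.injEq] at h
    obtain ⟨htail, hhead⟩ := h
    have hk : k = k' := hw_inj (Finset.singleton_injective hhead)
    rcases pair_eq htail with ⟨h1, h2⟩ | ⟨h1, h2⟩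
    · have hi : i = i' := hu_inj h1
      have hd : D j = D j' := by
        have := hu_inj h2
        rw [hi] at this
        exact add_left_cancel this
      exact Prod.ext (hDD _ _ hd) (Prod.ext hi hk)
    · exfalso
      have h1' : i = i' + D j' := hu_inj h1
      have h2' : i + D j = i' := hu_inj h2
      rw [h1', add_assoc] at h2'
      exact hDsum j' j (add_eq_left.mp h2')
  refine ⟨Finset.image A Finset.univ, fun _ => 4 * ε, ?_, ?_, ?_, ?_⟩
  · -- rank three
    intro f hf
    obtain ⟨p, -, hp⟩ := Finset.mem_image.mp hf
    obtain ⟨j, i, k⟩ := p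
    rw [← hp, hA_def]
    constructor
    · have hne : u i ≠ u (i + D j) := hu_inj.ne fun h => hD0 j (left_eq_add.mp h)
      rw [Finset.card_insert_of_notMem (by simpa using hne), Finset.card_singleton]
    · exact Finset.card_singleton _
  · intro f _; positivity
  · -- cardinality
    rw [Finset.card_image_of_injective _ hA_inj, Finset.card_univ]
    have hcard : Fintype.card (Fin s × ZMod n × ZMod n) = s * (n * n) := by
      simp [ZMod.card]
    rw [hcard]
    refine le_of_eq ?_
    rw [div_eq_iff (by positivity)]
    push_cast
    linear_combination (-(n:ℝ)^2) * hse
  · -- main part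
    intro Ft hFt zt hzt hx
    obtain ⟨f₀, hf₀F, hf₀Ft⟩ := Finset.exists_of_ssubset hFt
    obtain ⟨p₀, -, hA₀⟩ := Finset.mem_image.mp hf₀F
    obtain ⟨j, i, k⟩ := p₀
    set jj : ZMod n := i + D j with hjj_def
    -- test vectors
    set x1 : Fin (2*n) → ℝ :=
      (fun v => if v = u i ∨ (n ≤ (v : ℕ) ∧ v ≠ w k) then 1 else 0) with hx1_def
    set x2 : Fin (2*n) → ℝ :=
      (fun v => if v = u jj ∨ (n ≤ (v : ℕ) ∧ v ≠ w k) then 1 else 0) with hx2_def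
    set x12 : Fin (2*n) → ℝ :=
      (fun v => if (v = u i ∨ v = u jj) ∨ (n ≤ (v : ℕ) ∧ v ≠ w k) then 1 else 0) with hx12_def
    have h01x1 : ∀ v, x1 v = 0 ∨ x1 v = 1 := by
      intro v; rw [hx1_def]; dsimp only; split_ifs <;> simp
    have h01x2 : ∀ v, x2 v = 0 ∨ x2 v = 1 := by
      intro v; rw [hx2_def]; dsimp only; split_ifs <;> simp
    have h01x12 : ∀ v, x12 v = 0 ∨ x12 v = 1 := by
      intro v; rw [hx12_def]; dsimp only; split_ifs <;> simp
    -- evaluations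
    have hunotW : ∀ a : ZMod n, ¬ (n ≤ ((u a : Fin (2*n)) : ℕ)) := by
      intro a; rw [huval]; have := ZMod.val_lt a; omega
    have hx1u : ∀ t a : ZMod n,
        (if (u a : Fin (2*n)) = u t ∨ (n ≤ ((u a : Fin (2*n)) : ℕ) ∧ u a ≠ w k) then (1:ℝ) else 0)
          = if a = t then 1 else 0 := by
      intro t a
      refine if_congr ?_ rfl rfl
      constructor
      · rintro (h | ⟨h, -⟩)
        · exact hu_inj h
        · exact absurd h (hunotW a)
      · intro h; exact Or.inl (by rw [h])
    have hx1w : ∀ t b : ZMod n,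
        (if (w b : Fin (2*n)) = u t ∨ (n ≤ ((w b : Fin (2*n)) : ℕ) ∧ w b ≠ w k) then (1:ℝ) else 0)
          = if b = k then 0 else 1 := by
      intro t b
      by_cases h : b = k
      · subst h
        rw [if_neg, if_pos rfl]
        rintro (h1 | ⟨-, h2⟩)
        · exact huw t b h1.symm
        · exact h2 rfl
      · rw [if_pos, if_neg h]
        exact Or.inr ⟨by rw [hwval]; omega, fun h2 => h (hw_inj h2)⟩
    have hx12u : ∀ a : ZMod n,
        (if ((u a : Fin (2*n)) = u i ∨ (u a : Fin (2*n)) = u jj)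
            ∨ (n ≤ ((u a : Fin (2*n)) : ℕ) ∧ u a ≠ w k) then (1:ℝ) else 0)
          = if a = i ∨ a = jj then 1 else 0 := by
      intro a
      refine if_congr ?_ rfl rfl
      constructor
      · rintro ((h | h) | ⟨h, -⟩)
        · exact Or.inl (hu_inj h)
        · exact Or.inr (hu_inj h)
        · exact absurd h (hunotW a)
      · rintro (h | h)
        · exact Or.inl (Or.inl (by rw [h]))
        · exact Or.inl (Or.inr (by rw [h]))
    have hx12w : ∀ b : ZMod n,
        (if ((w b : Fin (2*n)) = u i ∨ (w b : Fin (2*n)) = u jj)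
            ∨ (n ≤ ((w b : Fin (2*n)) : ℕ) ∧ w b ≠ w k) then (1:ℝ) else 0)
          = if b = k then 0 else 1 := by
      intro b
      by_cases h : b = k
      · subst h
        rw [if_neg, if_pos rfl]
        rintro ((h1 | h1) | ⟨-, h2⟩)
        · exact huw i b h1.symm
        · exact huw jj b h1.symm
        · exact h2 rfl
      · rw [if_pos, if_neg h]
        exact Or.inr ⟨by rw [hwval]; omega, fun h2 => h (hw_inj h2)⟩
    -- energy formulas
    have hE1 : ∀ p : Fin s × ZMod n × ZMod n, dirEnergy x1 (A p)
        = if (p.2.1 = i ∨ p.2.1 + D p.1 = i) ∧ p.2.2 = k then 1 else 0 := by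
      rintro ⟨j', i', k'⟩
      rw [hA_def]
      rw [dirEnergy_pair x1 h01x1]
      refine if_congr (and_congr ?_ ?_) rfl rfl
      · rw [hx1_def]
        simp only
        rw [hx1u i i', hx1u i (i' + D j'), ite_one_eq_one, ite_one_eq_one]
      · rw [hx1_def]
        simp only
        rw [hx1w i k', ite_zero_eq_zero]
    have hE2 : ∀ p : Fin s × ZMod n × ZMod n, dirEnergy x2 (A p)
        = if (p.2.1 = jj ∨ p.2.1 + D p.1 = jj) ∧ p.2.2 = k then 1 else 0 := by
      rintro ⟨j', i', k'⟩
      rw [hA_def]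
      rw [dirEnergy_pair x2 h01x2]
      refine if_congr (and_congr ?_ ?_) rfl rfl
      · rw [hx2_def]
        simp only
        rw [hx1u jj i', hx1u jj (i' + D j'), ite_one_eq_one, ite_one_eq_one]
      · rw [hx2_def]
        simp only
        rw [hx1w jj k', ite_zero_eq_zero]
    have hE12 : ∀ p : Fin s × ZMod n × ZMod n, dirEnergy x12 (A p)
        = if ((p.2.1 = i ∨ p.2.1 + D p.1 = i) ∨ (p.2.1 = jj ∨ p.2.1 + D p.1 = jj))
            ∧ p.2.2 = k then 1 else 0 := by
      rintro ⟨j', i', k'⟩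
      rw [hA_def]
      rw [dirEnergy_pair x12 h01x12]
      refine if_congr (and_congr ?_ ?_) rfl rfl
      · rw [hx12_def]
        simp only
        rw [hx12u i', hx12u (i' + D j'), ite_one_eq_one, ite_one_eq_one]
        tauto
      · rw [hx12_def]
        simp only
        rw [hx12w k', ite_zero_eq_zero]
    -- sums over F
    have hSF1 : ∑ f ∈ Finset.image A Finset.univ, (4*ε) * dirEnergy x1 f = 1 := by
      rw [Finset.sum_image (fun a _ b _ h => hA_inj h)]
      rw [Finset.sum_congr rfl fun p _ => by rw [hE1 p]]
      rw [count1 (4*ε) D hD0 i k]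
      linear_combination hse
    have hSF2 : ∑ f ∈ Finset.image A Finset.univ, (4*ε) * dirEnergy x2 f = 1 := by
      rw [Finset.sum_image (fun a _ b _ h => hA_inj h)]
      rw [Finset.sum_congr rfl fun p _ => by rw [hE2 p]]
      rw [count1 (4*ε) D hD0 jj k]
      linear_combination hse
    have hSF12 : ∑ f ∈ Finset.image A Finset.univ, (4*ε) * dirEnergy x12 f = 2 - 4*ε := by
      rw [Finset.sum_image (fun a _ b _ h => hA_inj h)]
      rw [Finset.sum_congr rfl fun p _ => by rw [hE12 p]]
      rw [hjj_def, count2 (4*ε) D hD0 hDD hDsum j i k]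
      linear_combination 2 * hse
    -- the zero identity on Ft
    have hzero : (∑ f ∈ Ft, zt f * dirEnergy x1 f) + (∑ f ∈ Ft, zt f * dirEnergy x2 f)
        - (∑ f ∈ Ft, zt f * dirEnergy x12 f) = 0 := by
      rw [← Finset.sum_add_distrib, ← Finset.sum_sub_distrib]
      refine Finset.sum_eq_zero fun f hf => ?_
      have hfF : f ∈ Finset.image A Finset.univ := hFt.subset hf
      obtain ⟨p, -, hp⟩ := Finset.mem_image.mp hfF
      have hne : f ≠ f₀ := fun h => hf₀Ft (h ▸ hf)
      have hkey := ind_incl_excl' (p.2.1 = i ∨ p.2.1 + D p.1 = i)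
        (p.2.1 = jj ∨ p.2.1 + D p.1 = jj) (p.2.2 = k)
      have hnot : ¬ (((p.2.1 = i ∨ p.2.1 + D p.1 = i) ∧ (p.2.1 = jj ∨ p.2.1 + D p.1 = jj))
          ∧ p.2.2 = k) := by
        rintro ⟨⟨h1 | h1, h2 | h2⟩, h3⟩
        · rw [h1] at h2; exact hD0 j (left_eq_add.mp (hjj_def ▸ h2))
        · rw [h1, hjj_def] at h2
          have hd : D p.1 = D j := add_left_cancel h2
          apply hne
          rw [← hp, ← hA₀]
          obtain ⟨pj, pi, pk⟩ := p
          simp only at h1 h3 hd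
          rw [h1, h3, hDD _ _ hd]
        · rw [h2, hjj_def, add_assoc] at h1
          exact hDsum j p.1 (add_eq_left.mp h1)
        · rw [h1] at h2
          exact hD0 j (left_eq_add.mp (hjj_def ▸ h2))
      calc zt f * dirEnergy x1 f + zt f * dirEnergy x2 f - zt f * dirEnergy x12 f
          = zt f * (dirEnergy x1 f + dirEnergy x2 f - dirEnergy x12 f) := by ring
        _ = 0 := by
            rw [← hp, hE1 p, hE2 p, hE12 p, hkey, if_neg hnot, mul_zero]
    -- conclude
    obtain ⟨l1, -⟩ := hx x1 h01x1
    obtain ⟨l2, -⟩ := hx x2 h01x2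
    obtain ⟨-, u12⟩ := hx x12 h01x12
    rw [hSF1] at l1
    rw [hSF2] at l2
    rw [hSF12] at u12
    nlinarith [mul_pos hε0 hε0]
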